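/- (Core identity of the hardness reduction for the drastic measure.) Let G be a finite set of size m₀ equipped with a symmetric conflict relation, let r ≥ 1, and let D = G ∪ {e₁,…,e_r} ∪ {f}, where e₁,…,e_r,f are pairwise distinct elements not in G. Extend the conflict relation to D by: C(e_i, e_j) for all i ≠ j; C(e_i, f) for all i; and no conflicts between any of e₁,…,e_r,f and any element of G. Then Shapley(D, I_d, f) = Σ_{k=0}^{m₀} M_k · r · (k+1)! · (m₀ − k + r − 1)! / (m₀ + r + 1)!, where M_k denotes the number of consistent k-element subsets of G. -/

import Mathlib

open scoped BigOperators Classical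

variable {α : Type*} [DecidableEq α]

/-- The Shapley value of `f` in the cooperative game `v` over the set of players `D`. -/
noncomputable def Shapley (D : Finset α) (v : Finset α → ℝ) (f : α) : ℝ :=
  ∑ B ∈ (D \ {f}).powerset,
    ((B.card.factorial * (D.card - B.card - 1).factorial : ℕ) : ℝ) / (D.card.factorial : ℝ) *
      (v (B ∪ {f}) - v B)

/-- A finite set `E` is consistent if it contains no two distinct conflicting elements. -/
def Consistent (C : α → α → Prop) (E : Finset α) : Prop :=
  ∀ g ∈ E, ∀ h ∈ E, g ≠ h → ¬ C g h

/-- The drastic inconsistency measure: `1` if the set is inconsistent, `0` otherwise. -/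
noncomputable def Idrastic (C : α → α → Prop) (E : Finset α) : ℝ :=
  if Consistent C E then 0 else 1

/-- Core identity of the hardness reduction for the drastic measure:
with `D = G ∪ {e₁,…,e_r} ∪ {f}`, the `e i` pairwise conflicting, each `e i`
conflicting with `f`, and no conflicts between `G` and the new elements,
`Shapley(D, I_d, f) = Σ_{k=0}^{|G|} M_k · r · (k+1)! · (|G|−k+r−1)! / (|G|+r+1)!`,
where `M_k` is the number of consistent `k`-element subsets of `G`. -/
theorem shapley_drastic_reduction_identity (C : α → α → Prop) (hsymm : Symmetric C)
    (G : Finset α) (r : ℕ) (hr : 1 ≤ r) (e : Fin r → α) (f : α)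
    (he_inj : Function.Injective e)
    (heG : ∀ i, e i ∉ G) (hfG : f ∉ G) (hfe : ∀ i, f ≠ e i)
    (hee : ∀ i j, i ≠ j → C (e i) (e j))
    (hef : ∀ i, C (e i) f)
    (heg : ∀ i, ∀ g ∈ G, ¬ C (e i) g)
    (hfg : ∀ g ∈ G, ¬ C f g) :
    Shapley ((G ∪ Finset.image e Finset.univ) ∪ {f}) (Idrastic C) f =
      ∑ k ∈ Finset.range (G.card + 1),
        (((G.powersetCard k).filter (Consistent C)).card : ℝ) * (r : ℝ) *
          ((k + 1).factorial : ℝ) * ((G.card - k + r - 1).factorial : ℝ) /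
            ((G.card + r + 1).factorial : ℝ) := by

  classical
  set E : Finset α := Finset.image e Finset.univ with hEdef
  have heE : ∀ i, e i ∈ E := fun i => Finset.mem_image.mpr ⟨i, Finset.mem_univ i, rfl⟩
  have hfE : f ∉ E := by
    simp only [hEdef, Finset.mem_image, Finset.mem_univ, true_and, not_exists]
    exact fun i hi => hfe i hi.symm
  have hGE : Disjoint G E := by
    rw [Finset.disjoint_right]
    intro a ha
    simp only [hEdef, Finset.mem_image, Finset.mem_univ, true_and] at ha
    obtain ⟨i, rfl⟩ := ha
    exact heG i
  have hfS : f ∉ G ∪ E := Finset.notMem_union.mpr ⟨hfG, hfE⟩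
  have hcardE : E.card = r := by
    rw [hEdef, Finset.card_image_of_injective _ he_inj, Finset.card_univ, Fintype.card_fin]
  have hcardS : (G ∪ E).card = G.card + r := by
    rw [Finset.card_union_of_disjoint hGE, hcardE]
  have hcardD : ((G ∪ E) ∪ {f}).card = G.card + r + 1 := by
    rw [Finset.card_union_of_disjoint (Finset.disjoint_singleton_right.mpr hfS), hcardS,
      Finset.card_singleton]
  have hsdiff : ((G ∪ E) ∪ {f}) \ {f} = G ∪ E := by
    rw [Finset.union_sdiff_right, Finset.sdiff_singleton_eq_erase, Finset.erase_eq_of_notMem hfS]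
  unfold Shapley
  rw [hsdiff, hcardD]
  -- Step A: rewrite each summand using an if-then-else
  have key : ∀ B ∈ (G ∪ E).powerset,
      ((B.card.factorial * (G.card + r + 1 - B.card - 1).factorial : ℕ) : ℝ) /
          ((G.card + r + 1).factorial : ℝ) * (Idrastic C (B ∪ {f}) - Idrastic C B) =
      if Consistent C B ∧ ∃ i, e i ∈ B then
        ((B.card.factorial * (G.card + r + 1 - B.card - 1).factorial : ℕ) : ℝ) /
          ((G.card + r + 1).factorial : ℝ) else 0 := by
    intro B hB
    rw [Finset.mem_powerset] at hB
    by_cases hc : Consistent C B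
    · by_cases hex : ∃ i, e i ∈ B
      · have hnc : ¬ Consistent C (B ∪ {f}) := by
          obtain ⟨i, hi⟩ := hex
          intro hcons
          exact hcons (e i) (Finset.mem_union_left _ hi) f
            (Finset.mem_union_right _ (Finset.mem_singleton_self f)) (Ne.symm (hfe i)) (hef i)
        simp [Idrastic, hc, hnc, hex, -Finset.union_singleton]
      · have hcons : Consistent C (B ∪ {f}) := by
          intro g hg h hh hne hC
          rcases Finset.mem_union.mp hg with hgB | hgf
          · rcases Finset.mem_union.mp hh with hhB | hhf
            · exact hc g hgB h hhB hne hC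
            · have := Finset.mem_singleton.mp hhf; subst this
              rcases Finset.mem_union.mp (hB hgB) with hgG | hgE
              · exact hfg g hgG (hsymm hC)
              · obtain ⟨i, -, rfl⟩ := Finset.mem_image.mp hgE
                exact hex ⟨i, hgB⟩
          · have := Finset.mem_singleton.mp hgf; subst this
            rcases Finset.mem_union.mp hh with hhB | hhf
            · rcases Finset.mem_union.mp (hB hhB) with hhG | hhE
              · exact hfg h hhG hC
              · obtain ⟨i, -, rfl⟩ := Finset.mem_image.mp hhE
                exact hex ⟨i, hhB⟩
            · exact hne (Finset.mem_singleton.mp hhf ▸ rfl)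
        simp [Idrastic, hc, hcons, hex, -Finset.union_singleton]
    · have hnc : ¬ Consistent C (B ∪ {f}) := fun h =>
        hc (fun g hg h' hh' hne => h g (Finset.mem_union_left _ hg) h' (Finset.mem_union_left _ hh') hne)
      simp [Idrastic, hc, hnc, -Finset.union_singleton]
  rw [Finset.sum_congr rfl key, ← Finset.sum_filter]
  -- Step C: bijection with pairs (A, i), A ⊆ G consistent, i : Fin r
  have hinterG : ∀ (A : Finset α) (i : Fin r), A ⊆ G → (A ∪ {e i}) ∩ G = A := by
    intro A i hA
    ext x
    simp only [Finset.mem_inter, Finset.mem_union, Finset.mem_singleton]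
    constructor
    · rintro ⟨hx | rfl, hxG⟩
      · exact hx
      · exact absurd hxG (heG i)
    · exact fun hx => ⟨Or.inl hx, hA hx⟩
  have hbij : ∑ p ∈ (G.powerset.filter (Consistent C)) ×ˢ (Finset.univ : Finset (Fin r)),
      (((p.1 ∪ {e p.2}).card.factorial *
          (G.card + r + 1 - (p.1 ∪ {e p.2}).card - 1).factorial : ℕ) : ℝ) /
        ((G.card + r + 1).factorial : ℝ)
      = ∑ B ∈ (G ∪ E).powerset.filter (fun B => Consistent C B ∧ ∃ i, e i ∈ B),
      ((B.card.factorial * (G.card + r + 1 - B.card - 1).factorial : ℕ) : ℝ) /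
        ((G.card + r + 1).factorial : ℝ) := by
    refine Finset.sum_bij (fun p _ => p.1 ∪ {e p.2}) ?_ ?_ ?_ ?_
    · rintro ⟨A, i⟩ hp
      rw [Finset.mem_product] at hp
      obtain ⟨hA1, -⟩ := hp
      rw [Finset.mem_filter, Finset.mem_powerset] at hA1
      obtain ⟨hAG, hAcons⟩ := hA1
      rw [Finset.mem_filter, Finset.mem_powerset]
      refine ⟨Finset.union_subset (hAG.trans Finset.subset_union_left)
        (Finset.singleton_subset_iff.mpr (Finset.mem_union_right _ (heE i))), ?_, i,
        Finset.mem_union_right _ (Finset.mem_singleton_self _)⟩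
      intro g hg h hh hne hC
      rcases Finset.mem_union.mp hg with hgA | hgi
      · rcases Finset.mem_union.mp hh with hhA | hhi
        · exact hAcons g hgA h hhA hne hC
        · have := Finset.mem_singleton.mp hhi; subst this
          exact heg i g (hAG hgA) (hsymm hC)
      · have := Finset.mem_singleton.mp hgi; subst this
        rcases Finset.mem_union.mp hh with hhA | hhi
        · exact heg i h (hAG hhA) hC
        · exact hne ((Finset.mem_singleton.mp hhi) ▸ rfl)
    · rintro ⟨A, i⟩ h1 ⟨A', j⟩ h2 heq
      simp only at heq
      rw [Finset.mem_product, Finset.mem_filter, Finset.mem_powerset] at h1 h2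
      have hAG : A ⊆ G := h1.1.1
      have hA'G : A' ⊆ G := h2.1.1
      have hAA' : A = A' := by
        rw [← hinterG A i hAG, ← hinterG A' j hA'G, heq]
      have hij : i = j := by
        have hmem : e i ∈ A' ∪ {e j} := heq ▸ (Finset.mem_union_right _ (Finset.mem_singleton_self _))
        rcases Finset.mem_union.mp hmem with h | h
        · exact absurd (hA'G h) (heG i)
        · exact he_inj (Finset.mem_singleton.mp h)
      simp [hAA', hij]
    · intro B hB
      rw [Finset.mem_filter, Finset.mem_powerset] at hB
      obtain ⟨hBS, hBcons, i, hiB⟩ := hB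
      refine ⟨(B ∩ G, i), ?_, ?_⟩
      · rw [Finset.mem_product, Finset.mem_filter, Finset.mem_powerset]
        exact ⟨⟨Finset.inter_subset_right, fun g hg h hh hne =>
          hBcons g (Finset.mem_of_mem_inter_left hg) h (Finset.mem_of_mem_inter_left hh) hne⟩,
          Finset.mem_univ i⟩
      · ext x
        simp only [Finset.mem_union, Finset.mem_inter, Finset.mem_singleton]
        constructor
        · rintro (⟨hx, -⟩ | rfl)
          · exact hx
          · exact hiB
        · intro hx
          rcases Finset.mem_union.mp (hBS hx) with hxG | hxE
          · exact Or.inl ⟨hx, hxG⟩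
          · obtain ⟨j, -, rfl⟩ := Finset.mem_image.mp hxE
            by_cases hji : j = i
            · subst hji; exact Or.inr rfl
            · exact (hBcons (e j) hx (e i) hiB (fun h => hji (he_inj h)) (hee j i hji)).elim
    · intro a ha
      rfl
  rw [← hbij, Finset.sum_product]
  -- Step: inner sum over i is constant
  have step2 : ∀ A ∈ G.powerset.filter (Consistent C),
      (∑ i : Fin r, (((A ∪ {e i}).card.factorial *
          (G.card + r + 1 - (A ∪ {e i}).card - 1).factorial : ℕ) : ℝ) /
        ((G.card + r + 1).factorial : ℝ))
      = (r : ℝ) * ((((A.card + 1).factorial *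
          (G.card - A.card + r - 1).factorial : ℕ)) : ℝ) / ((G.card + r + 1).factorial : ℝ) := by
    intro A hA
    rw [Finset.mem_filter, Finset.mem_powerset] at hA
    have hk : A.card ≤ G.card := Finset.card_le_card hA.1
    have hconst : ∀ i : Fin r, (((A ∪ {e i}).card.factorial *
          (G.card + r + 1 - (A ∪ {e i}).card - 1).factorial : ℕ) : ℝ) /
        ((G.card + r + 1).factorial : ℝ)
        = ((((A.card + 1).factorial *
          (G.card - A.card + r - 1).factorial : ℕ)) : ℝ) / ((G.card + r + 1).factorial : ℝ) := by
      intro i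
      have hcardAi : (A ∪ {e i}).card = A.card + 1 := by
        rw [Finset.card_union_of_disjoint (Finset.disjoint_singleton_right.mpr
          (fun h => heG i (hA.1 h))), Finset.card_singleton]
      have harith : G.card + r + 1 - (A.card + 1) - 1 = G.card - A.card + r - 1 := by omega
      rw [hcardAi, harith]
    rw [Finset.sum_congr rfl (fun i _ => hconst i), Finset.sum_const, Finset.card_univ,
      Fintype.card_fin, nsmul_eq_mul]
    ring
  rw [Finset.sum_congr rfl step2]
  -- Step D: group by cardinality
  rw [Finset.sum_filter, Finset.sum_powerset]
  refine Finset.sum_congr rfl fun k hk => ?_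
  have hstep : ∀ A ∈ G.powersetCard k,
      (if Consistent C A then (r : ℝ) * ((((A.card + 1).factorial *
          (G.card - A.card + r - 1).factorial : ℕ)) : ℝ) / ((G.card + r + 1).factorial : ℝ) else 0)
      = (if Consistent C A then (r : ℝ) * ((((k + 1).factorial *
          (G.card - k + r - 1).factorial : ℕ)) : ℝ) / ((G.card + r + 1).factorial : ℝ) else 0) := by
    intro A hA
    rw [(Finset.mem_powersetCard.mp hA).2]
  rw [Finset.sum_congr rfl hstep, ← Finset.sum_filter, Finset.sum_const, nsmul_eq_mul]
  push_cast
  ring
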